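/- Let (X,d) be a compact metric space and T : X → 2^X upper semi-continuous, open, and expanding with constants λ > 1, η > 0. Then there exists ε > 0 such that for all y, z ∈ X with d(y,z) < ε: #T^{-1}(y) = #T^{-1}(z) =: l, and if l ≥ 1 one can enumerate T^{-1}(y) = {x_1,…,x_l} and T^{-1}(z) = {w_1,…,w_l} with d(x_i, w_i) ≤ d(y,z)/λ for each i. -/

import Mathlib

theorem stmt17 {X : Type*} [MetricSpace X] [CompactSpace X] (T : X → Set X)
    (hT : IsClosed {p : X × X | p.2 ∈ T p.1})
    (hopen : ∀ A : Set X, IsOpen A → IsOpen {y : X | ∃ x ∈ A, y ∈ T x})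
    (lam η : ℝ) (hlam : 1 < lam) (hη : 0 < η)
    (hexp : ∀ x y : X, dist x y ≤ η → ∀ x' ∈ T x, ∀ y' ∈ T y, lam * dist x y ≤ dist x' y') :
    ∃ ε > 0, ∀ y z : X, dist y z < ε →
      ∃ l : ℕ, {x : X | y ∈ T x}.encard = l ∧ {x : X | z ∈ T x}.encard = l ∧
        (1 ≤ l → ∃ xe we : Fin l → X,
          Function.Injective xe ∧ Function.Injective we ∧
          Set.range xe = {x : X | y ∈ T x} ∧ Set.range we = {x : X | z ∈ T x} ∧
          ∀ i : Fin l, dist (xe i) (we i) ≤ dist y z / lam) := by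
  have hlam0 : (0:ℝ) < lam := lt_trans one_pos hlam
  -- separation: two preimages of the same point within η coincide
  have sep : ∀ y x x' : X, y ∈ T x → y ∈ T x' → dist x x' ≤ η → x = x' := by
    intro y x x' hx hx' hd
    have h1 := hexp x x' hd y hx y hx'
    rw [dist_self] at h1
    have h2 : dist x x' = 0 := by nlinarith [dist_nonneg (x := x) (y := x')]
    exact dist_eq_zero.mp h2
  -- finiteness of preimages
  have hfin : ∀ y : X, ({x : X | y ∈ T x}).Finite := by
    intro y
    have hSclosed : IsClosed {x : X | y ∈ T x} := by
      have he : {x : X | y ∈ T x} = (fun x => (x, y)) ⁻¹' {p : X × X | p.2 ∈ T p.1} := rfl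
      rw [he]
      exact hT.preimage (continuous_id.prodMk continuous_const)
    have hScomp : IsCompact {x : X | y ∈ T x} := hSclosed.isCompact
    obtain ⟨t, hts, htf, hcov⟩ := hScomp.elim_finite_subcover_image
      (b := {x : X | y ∈ T x}) (c := fun x => Metric.ball x η)
      (fun x _ => Metric.isOpen_ball)
      (fun x hx => Set.mem_biUnion hx (Metric.mem_ball_self hη))
    refine htf.subset ?_
    intro s hs
    obtain ⟨x, hxt, hsx⟩ := Set.mem_iUnion₂.mp (hcov hs)
    have : s = x := sep y s x hs (hts hxt) (le_of_lt hsx)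
    rwa [this]
  -- main claim: uniform existence of nearby preimages
  have claim : ∃ ε > 0, ∀ y z : X, dist y z < ε → ∀ x, y ∈ T x →
      ∃ w, z ∈ T w ∧ dist x w ≤ dist y z / lam := by
    set K := {p : X × X | p.2 ∈ T p.1} with hK
    have hKc : IsCompact K := hT.isCompact
    have hV : ∀ xb : X, IsOpen {v : X | ∃ u ∈ Metric.ball xb (η/2), v ∈ T u} :=
      fun xb => hopen _ Metric.isOpen_ball
    have hmem : ∀ p : X × X, ∃ r > 0, p ∈ K →
        Metric.ball p.2 r ⊆ {v : X | ∃ u ∈ Metric.ball p.1 (η/2), v ∈ T u} := by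
      intro p
      by_cases hp : p ∈ K
      · have hv : p.2 ∈ {v : X | ∃ u ∈ Metric.ball p.1 (η/2), v ∈ T u} :=
          ⟨p.1, Metric.mem_ball_self (by linarith), hp⟩
        obtain ⟨r, hr, hball⟩ := (Metric.isOpen_iff.mp (hV p.1)) _ hv
        exact ⟨r, hr, fun _ => hball⟩
      · exact ⟨1, one_pos, fun h => absurd h hp⟩
    choose r hr hball using hmem
    obtain ⟨t, htK, htf, hcov⟩ := hKc.elim_finite_subcover_image
      (b := K) (c := fun p => Metric.ball p.1 (η/2) ×ˢ Metric.ball p.2 (r p / 2))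
      (fun p _ => Metric.isOpen_ball.prod Metric.isOpen_ball)
      (fun p hp => Set.mem_biUnion hp
        ⟨Metric.mem_ball_self (by linarith), Metric.mem_ball_self (by linarith [hr p])⟩)
    -- choose ε as a positive lower bound of r p / 2 over the finite set t
    have hεex : ∃ ε > 0, ∀ p ∈ t, ε ≤ r p / 2 := by
      refine Set.Finite.induction_on (motive := fun s _ => ∃ ε > 0, ∀ p ∈ s, ε ≤ r p / 2) t htf ⟨1, one_pos, by simp⟩ ?_
      rintro p s hps hsf ⟨ε, hε, hle⟩
      refine ⟨min ε (r p / 2), lt_min hε (by linarith [hr p]), ?_⟩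
      rintro q hq
      rcases hq with hq | hq
      · rw [hq]; exact min_le_right _ _
      · exact le_trans (min_le_left _ _) (hle q hq)
    obtain ⟨ε, hε, hεle⟩ := hεex
    refine ⟨ε, hε, ?_⟩
    intro y z hyz x hx
    have hxK : (x, y) ∈ K := hx
    obtain ⟨p, hpt, hxp, hyp⟩ := Set.mem_iUnion₂.mp (hcov hxK)
    have hpK : p ∈ K := htK hpt
    have hzp : z ∈ Metric.ball p.2 (r p) := by
      have : dist z p.2 ≤ dist z y + dist y p.2 := dist_triangle _ _ _
      have h1 : dist y p.2 < r p / 2 := hyp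
      have h2 : dist z y < ε := by rwa [dist_comm]
      have h3 : ε ≤ r p / 2 := hεle p hpt
      simp only [Metric.mem_ball]
      linarith
    obtain ⟨u, hu, hzu⟩ := hball p hpK hzp
    have hdu : dist x u ≤ η := by
      have h1 : dist x p.1 < η / 2 := hxp
      have h2 : dist u p.1 < η / 2 := hu
      have : dist x u ≤ dist x p.1 + dist p.1 u := dist_triangle _ _ _
      rw [dist_comm p.1 u] at this
      linarith
    have hle := hexp x u hdu y hx z hzu
    refine ⟨u, hzu, ?_⟩
    rw [le_div_iff₀ hlam0, mul_comm]
    exact hle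
  obtain ⟨ε₀, hε₀, hclaim⟩ := claim
  refine ⟨min ε₀ (lam * η / 2), lt_min hε₀ (by positivity), ?_⟩
  intro y z hyz
  have hyz₀ : dist y z < ε₀ := lt_of_lt_of_le hyz (min_le_left _ _)
  have hzy₀ : dist z y < ε₀ := by rwa [dist_comm]
  have hyzη : dist y z < lam * η / 2 := lt_of_lt_of_le hyz (min_le_right _ _)
  have hdivη : dist y z / lam < η / 2 := by
    rw [div_lt_iff₀ hlam0]
    calc dist y z < lam * η / 2 := hyzη
    _ = η / 2 * lam := by ring
  set Sy := {x : X | y ∈ T x} with hSy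
  set Sz := {x : X | z ∈ T x} with hSz
  have hfy := hfin y
  have hfz := hfin z
  -- matching functions
  choose! f hf1 hf2 using hclaim y z hyz₀
  choose! g hg1 hg2 using hclaim z y hzy₀
  have hfmap : ∀ x ∈ Sy, f x ∈ Sz := fun x hx => hf1 x hx
  have hgmap : ∀ x ∈ Sz, g x ∈ Sy := fun x hx => hg1 x hx
  have hfinj : Set.InjOn f Sy := by
    intro a ha b hb hab
    refine sep y a b ha hb ?_
    have h1 := hf2 a ha
    have h2 := hf2 b hb
    rw [hab] at h1
    have : dist a b ≤ dist a (f b) + dist (f b) b := dist_triangle _ _ _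
    rw [dist_comm (f b) b] at this
    linarith
  have hginj : Set.InjOn g Sz := by
    intro a ha b hb hab
    refine sep z a b ha hb ?_
    have h1 := hg2 a ha
    have h2 := hg2 b hb
    rw [hab] at h1
    have hdzy : dist z y / lam < η / 2 := by rwa [dist_comm]
    have : dist a b ≤ dist a (g b) + dist (g b) b := dist_triangle _ _ _
    rw [dist_comm (g b) b] at this
    linarith
  have hle1 : Sy.ncard ≤ Sz.ncard := Set.ncard_le_ncard_of_injOn f hfmap hfinj hfz
  have hle2 : Sz.ncard ≤ Sy.ncard := Set.ncard_le_ncard_of_injOn g hgmap hginj hfy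
  have hcard : Sy.ncard = Sz.ncard := le_antisymm hle1 hle2
  refine ⟨Sy.ncard, ?_, ?_, ?_⟩
  · rw [← hfy.cast_ncard_eq]
  · rw [← hfz.cast_ncard_eq, hcard]
  · intro _
    haveI : Fintype Sy := hfy.fintype
    have hcardFt : Fintype.card Sy = Sy.ncard := by
      rw [Set.ncard_eq_toFinset_card', Set.toFinset_card]
    have e : Fin Sy.ncard ≃ Sy := (Fintype.equivFinOfCardEq hcardFt).symm
    set xe : Fin Sy.ncard → X := fun i => (e i : X) with hxe
    have hxeinj : Function.Injective xe := fun i j h => e.injective (Subtype.ext h)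
    have hxemem : ∀ i, xe i ∈ Sy := fun i => (e i).2
    have hxerange : Set.range xe = Sy := by
      have : xe = Subtype.val ∘ e := rfl
      rw [this, Set.range_comp, Equiv.range_eq_univ, Set.image_univ, Subtype.range_coe]
    set we : Fin Sy.ncard → X := fun i => f (xe i) with hwe
    have hweinj : Function.Injective we := by
      intro i j h
      exact hxeinj (hfinj (hxemem i) (hxemem j) h)
    have hwesub : Set.range we ⊆ Sz := by
      rintro _ ⟨i, rfl⟩
      exact hfmap _ (hxemem i)
    have hwecard : (Set.range we).ncard = Sy.ncard := by
      rw [← Nat.card_coe_set_eq, Nat.card_range_of_injective hweinj,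
        Nat.card_eq_fintype_card, Fintype.card_fin]
    have hwerange : Set.range we = Sz := by
      refine Set.eq_of_subset_of_ncard_le hwesub ?_ hfz
      rw [hwecard, hcard]
    refine ⟨xe, we, hxeinj, hweinj, hxerange, hwerange, ?_⟩
    intro i
    exact hf2 _ (hxemem i)
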